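/- Let n and t be positive integers, let G be a simple graph on n vertices containing no 3-cycle and no 5-cycle, and let v be a vertex of G with degree k₁(v). If α(G) < t < n − k₁(v) + 1, then k₁(v) + f(n − k₁(v) − t + 1) < t. -/

import Mathlib

noncomputable section

/-- the independence number of a graph -/
def indepNum {V : Type*} [Fintype V] (G : SimpleGraph V) : ℕ :=
  sSup {n | ∃ s : Finset V, s.card = n ∧ ∀ x ∈ s, ∀ y ∈ s, x ≠ y → ¬ G.Adj x y}

/-- `G` contains a cycle of length `m` -/
def HasCycleOfLength {V : Type*} (G : SimpleGraph V) (m : ℕ) : Prop :=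
  ∃ (v : V) (c : G.Walk v v), c.IsCycle ∧ c.length = m

/-- `G` contains no cycle of length 3 and no cycle of length 5 -/
def NoC3C5 {V : Type*} (G : SimpleGraph V) : Prop :=
  ¬ HasCycleOfLength G 3 ∧ ¬ HasCycleOfLength G 5

/-- `f n` is the minimum independence number among graphs on `n` vertices with
no 3-cycle and no 5-cycle -/
def fmin (n : ℕ) : ℕ :=
  sInf {k | ∃ G : SimpleGraph (Fin n), NoC3C5 G ∧ _root_.indepNum G = k}

namespace DegAux

open SimpleGraph Finset

variable {V : Type*} [Fintype V] {G : SimpleGraph V}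

/-- independence predicate for a finset -/
def IsIndepF {V : Type*} (G : SimpleGraph V) (s : Finset V) : Prop :=
  ∀ x ∈ s, ∀ y ∈ s, x ≠ y → ¬ G.Adj x y

lemma indepSet_bddAbove :
    BddAbove {n | ∃ s : Finset V, s.card = n ∧ ∀ x ∈ s, ∀ y ∈ s, x ≠ y → ¬ G.Adj x y} := by
  refine ⟨Fintype.card V, ?_⟩
  rintro n ⟨s, rfl, -⟩
  exact s.card_le_univ

lemma card_le_indepNum {s : Finset V} (hs : IsIndepF G s) : s.card ≤ _root_.indepNum G :=
  le_csSup indepSet_bddAbove ⟨s, rfl, hs⟩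

lemma exists_indep_card (G : SimpleGraph V) :
    ∃ s : Finset V, s.card = _root_.indepNum G ∧ IsIndepF G s := by
  have h : _root_.indepNum G ∈
      {n | ∃ s : Finset V, s.card = n ∧ ∀ x ∈ s, ∀ y ∈ s, x ≠ y → ¬ G.Adj x y} :=
    Nat.sSup_mem ⟨0, ∅, by simp, by simp⟩ indepSet_bddAbove
  obtain ⟨s, hc, hi⟩ := h
  exact ⟨s, hc, hi⟩

lemma hasC3 {a b c : V} (hab : G.Adj a b) (hbc : G.Adj b c) (hca : G.Adj c a) :
    HasCycleOfLength G 3 := by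
  refine ⟨a, .cons hab (.cons hbc (.cons hca .nil)), ?_, rfl⟩
  have h1 := hab.ne
  have h2 := hbc.ne
  have h3 := hca.ne
  constructor
  · constructor
    · simp [SimpleGraph.Walk.isTrail_def, Sym2.eq_iff]
      aesop
    · simp
  · simp
    aesop

lemma hasC5 {a b c d e : V} (h1 : G.Adj a b) (h2 : G.Adj b c) (h3 : G.Adj c d)
    (h4 : G.Adj d e) (h5 : G.Adj e a)
    (hac : a ≠ c) (had : a ≠ d) (hbd : b ≠ d) (hbe : b ≠ e) (hce : c ≠ e) :
    HasCycleOfLength G 5 := by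
  refine ⟨a, .cons h1 (.cons h2 (.cons h3 (.cons h4 (.cons h5 .nil)))), ?_, rfl⟩
  have n1 := h1.ne
  have n2 := h2.ne
  have n3 := h3.ne
  have n4 := h4.ne
  have n5 := h5.ne
  constructor
  · constructor
    · simp [SimpleGraph.Walk.isTrail_def, Sym2.eq_iff]
      aesop
    · simp
  · simp
    aesop

end DegAux

open DegAux SimpleGraph Finset in
/-- Degree condition: if `G` is a graph on `n` vertices with no 3-cycle and no
5-cycle, `v` a vertex of degree `k₁(v)`, and `α(G) < t < n − k₁(v) + 1`, then
`k₁(v) + f(n − k₁(v) − t + 1) < t`. -/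
theorem degree_condition (n t : ℕ) (hn : 0 < n) (ht : 0 < t)
    (G : SimpleGraph (Fin n)) (hG : NoC3C5 G) (v : Fin n)
    (h1 : _root_.indepNum G < t) (h2 : t < n - (G.neighborSet v).ncard + 1) :
    (G.neighborSet v).ncard + fmin (n - (G.neighborSet v).ncard - t + 1) < t := by
  classical
  obtain ⟨hC3, hC5⟩ := hG
  set k := (G.neighborSet v).ncard with hk
  set N : Finset (Fin n) := G.neighborFinset v with hN
  have hmemN : ∀ x, x ∈ N ↔ G.Adj v x := by
    intro x; simp [hN]
  have hkN : N.card = k := by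
    rw [hk, hN, SimpleGraph.neighborFinset_def, ← Set.ncard_eq_toFinset_card']
  -- N is independent (no triangles)
  have hNindep : IsIndepF G N := by
    intro x hx y hy hxy hadj
    exact hC3 (hasC3 ((hmemN x).1 hx) hadj ((hmemN y).1 hy).symm)
  -- second neighborhood
  set N₂ : Finset (Fin n) :=
    univ.filter (fun u => u ≠ v ∧ u ∉ N ∧ ∃ w ∈ N, G.Adj w u) with hN₂
  have hmemN₂ : ∀ u, u ∈ N₂ ↔ u ≠ v ∧ u ∉ N ∧ ∃ w ∈ N, G.Adj w u := by
    intro u; simp [hN₂]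
  have hvN : v ∉ N := by simp [hN]
  have hvN₂ : v ∉ N₂ := by
    intro h; exact ((hmemN₂ v).1 h).1 rfl
  -- {v} ∪ N₂ is independent
  have hN2indep : IsIndepF G (insert v N₂) := by
    intro x hx y hy hxy hadj
    rcases Finset.mem_insert.1 hx with rfl | hx
    · rcases Finset.mem_insert.1 hy with rfl | hy
      · exact hxy rfl
      · exact ((hmemN₂ y).1 hy).2.1 ((hmemN y).2 hadj)
    · rcases Finset.mem_insert.1 hy with rfl | hy
      · exact ((hmemN₂ x).1 hx).2.1 ((hmemN x).2 hadj.symm)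
      · obtain ⟨hxv, hxN, w₁, hw₁, hw₁x⟩ := (hmemN₂ x).1 hx
        obtain ⟨hyv, hyN, w₂, hw₂, hw₂y⟩ := (hmemN₂ y).1 hy
        by_cases hww : w₁ = w₂
        · subst hww
          exact hC3 (hasC3 hw₁x hadj hw₂y.symm)
        · refine hC5 (hasC5 ((hmemN w₁).1 hw₁) hw₁x hadj hw₂y.symm
            ((hmemN w₂).1 hw₂).symm ?_ ?_ ?_ hww ?_)
          · exact fun h => hxv h.symm
          · exact fun h => hyv h.symm
          · exact fun h => hyN (h ▸ hw₁)
          · exact fun h => hxN (h ▸ hw₂)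
  -- the far set
  set D : Finset (Fin n) := univ \ (insert v N ∪ N₂) with hD
  have hDN : ∀ x ∈ D, ∀ w ∈ N, ¬ G.Adj w x := by
    intro x hx w hw hadj
    have hx' := Finset.mem_sdiff.1 hx
    have hxv : x ≠ v := by
      intro h; exact hx'.2 (Finset.mem_union_left _ (by simp [h]))
    have hxN : x ∉ N := by
      intro h; exact hx'.2 (Finset.mem_union_left _ (Finset.mem_insert_of_mem h))
    exact hx'.2 (Finset.mem_union_right _ ((hmemN₂ x).2 ⟨hxv, hxN, w, hw, hadj⟩))
  have hDv : ∀ x ∈ D, x ≠ v := by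
    intro x hx h
    exact (Finset.mem_sdiff.1 hx).2 (Finset.mem_union_left _ (by simp [h]))
  -- cardinalities
  have hNN2 : Disjoint (insert v N) N₂ := by
    rw [Finset.disjoint_left]
    intro a ha ha2
    rcases Finset.mem_insert.1 ha with rfl | ha
    · exact hvN₂ ha2
    · exact ((hmemN₂ a).1 ha2).2.1 ha
  have hcardU : (insert v N ∪ N₂).card = 1 + k + N₂.card := by
    rw [Finset.card_union_of_disjoint hNN2, Finset.card_insert_of_notMem hvN, hkN]
    omega
  have hcardUn : (insert v N ∪ N₂).card ≤ n := by
    simpa using (insert v N ∪ N₂).card_le_univ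
  have hcardD : D.card = n - (1 + k + N₂.card) := by
    rw [hD, Finset.card_sdiff_of_subset (Finset.subset_univ _), hcardU]
    simp
  -- |N₂| + 1 ≤ indepNum G
  have hN2card : N₂.card + 1 ≤ _root_.indepNum G := by
    have := card_le_indepNum hN2indep
    rw [Finset.card_insert_of_notMem hvN₂] at this
    omega
  have hkn : k ≤ n := by
    calc k = N.card := hkN.symm
    _ ≤ n := by simpa using N.card_le_univ
  set m := n - k - t + 1 with hm
  have hmD : m ≤ D.card := by omega
  -- choose m vertices in D
  obtain ⟨s, hsD, hscard⟩ := Finset.exists_subset_card_eq hmD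
  set e : Fin m ≃ {x // x ∈ s} := (s.equivFin.trans (finCongr hscard)).symm with he
  set ι : Fin m → Fin n := fun i => ((e i : {x // x ∈ s}) : Fin n) with hι
  have hιinj : Function.Injective ι := by
    intro a b hab
    exact e.injective (Subtype.ext hab)
  have hιD : ∀ i, ι i ∈ D := fun i => hsD (e i).2
  -- pull back graph
  set H : SimpleGraph (Fin m) := G.comap ι with hH
  have hHno : NoC3C5 H := by
    have hφinj : Function.Injective ⇑(SimpleGraph.Hom.comap ι G) := hιinj
    constructor
    · rintro ⟨a, c, hc, hl⟩
      exact hC3 ⟨ι a, c.map (SimpleGraph.Hom.comap ι G), hc.map hφinj, (SimpleGraph.Walk.length_map _ _).trans hl⟩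
    · rintro ⟨a, c, hc, hl⟩
      exact hC5 ⟨ι a, c.map (SimpleGraph.Hom.comap ι G), hc.map hφinj, (SimpleGraph.Walk.length_map _ _).trans hl⟩
  have hfm : fmin m ≤ _root_.indepNum H := Nat.sInf_le ⟨H, hHno, rfl⟩
  -- a maximum independent set of H
  obtain ⟨sH, hsHcard, hsHind⟩ := exists_indep_card H
  set sG : Finset (Fin n) := sH.image ι with hsG
  have hsGcard : sG.card = _root_.indepNum H := by
    rw [hsG, Finset.card_image_of_injective _ hιinj, hsHcard]
  have hsGD : ∀ x ∈ sG, x ∈ D := by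
    intro x hx
    obtain ⟨a, _, rfl⟩ := Finset.mem_image.1 hx
    exact hιD a
  -- sG ∪ N is independent
  have hbig : IsIndepF G (sG ∪ N) := by
    intro x hx y hy hxy hadj
    rcases Finset.mem_union.1 hx with hx | hx
    · rcases Finset.mem_union.1 hy with hy | hy
      · obtain ⟨a, ha, rfl⟩ := Finset.mem_image.1 hx
        obtain ⟨b, hb, rfl⟩ := Finset.mem_image.1 hy
        have hab : a ≠ b := fun h => hxy (by rw [h])
        exact hsHind a ha b hb hab hadj
      · exact hDN x (hsGD x hx) y hy hadj.symm
    · rcases Finset.mem_union.1 hy with hy | hy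
      · exact hDN y (hsGD y hy) x hx hadj
      · exact hNindep x hx y hy hxy hadj
  have hdisj : Disjoint sG N := by
    rw [Finset.disjoint_left]
    intro a ha haN
    exact (Finset.mem_sdiff.1 (hsGD a ha)).2
      (Finset.mem_union_left _ (Finset.mem_insert_of_mem haN))
  have hbigcard : (sG ∪ N).card = _root_.indepNum H + k := by
    rw [Finset.card_union_of_disjoint hdisj, hsGcard, hkN]
  have hfinal : _root_.indepNum H + k ≤ _root_.indepNum G := by
    rw [← hbigcard]; exact card_le_indepNum hbig
  omega

end
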